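/- For n ≥ 2, a right R-module M satisfies SG.dim M = n if and only if the supremum of |𝒜| over all coindependent families 𝒜 of proper submodules of any submodule N of any quotient module of M equals n. -/
import Mathlib


/-- Goldie (uniform) dimension: supremum of the number of independent nonzero submodules. -/
noncomputable def goldieDim (R M : Type*) [Ring R] [AddCommGroup M] [Module R M] : ℕ∞ :=
  ⨆ (n : ℕ) (_ : ∃ f : Fin n → Submodule R M, (∀ i, f i ≠ ⊥) ∧ iSupIndep f), (n : ℕ∞)

/-- Strong Goldie dimension: supremum of Goldie dimensions of all quotients. -/
noncomputable def sgoldieDim (R M : Type*) [Ring R] [AddCommGroup M] [Module R M] : ℕ∞ :=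
  ⨆ K : Submodule R M, goldieDim R (M ⧸ K)

/-- A family of proper submodules is coindependent if each member together with the
intersection of finitely many of the others is the whole module. -/
def Coindependent {R M ι : Type*} [Ring R] [AddCommGroup M] [Module R M]
    (K : ι → Submodule R M) : Prop :=
  (∀ i, K i ≠ ⊤) ∧ ∀ (i : ι) (s : Finset ι), i ∉ s → K i ⊔ (⨅ j ∈ s, K j) = ⊤

section Aux

open Submodule

variable {R A B : Type*} [Ring R] [AddCommGroup A] [Module R A]
  [AddCommGroup B] [Module R B]

/-- Goldie dimension is monotone under injective linear maps. -/
lemma goldieDim_le_of_injective (f : A →ₗ[R] B) (hf : Function.Injective f) :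
    goldieDim R A ≤ goldieDim R B := by
  refine iSup₂_le fun m hm => ?_
  obtain ⟨g, hg0, hgi⟩ := hm
  refine le_iSup₂_of_le m ⟨fun i => (g i).map f, fun i h => ?_, fun i => ?_⟩ le_rfl
  · refine hg0 i ?_
    rw [← LinearMap.le_ker_iff_map, LinearMap.ker_eq_bot.mpr hf, le_bot_iff] at h
    exact h
  · have h1 : (⨆ (j) (_ : j ≠ i), (g j).map f) = ((⨆ (j) (_ : j ≠ i), g j)).map f := by
      simp [Submodule.map_iSup]
    rw [disjoint_iff, h1, ← Submodule.map_inf f hf, disjoint_iff.mp (hgi i),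
      Submodule.map_bot]

/-- From a coindependent family of size `m` on `A`, the quotient by the intersection
carries an independent family of `m` nonzero submodules. -/
lemma exists_indep_of_coindependent {m : ℕ} (K : Fin m → Submodule R A)
    (hK : Coindependent K) :
    ∃ f : Fin m → Submodule R (A ⧸ ⨅ i, K i), (∀ i, f i ≠ ⊥) ∧ iSupIndep f := by
  set T : Submodule R A := ⨅ i, K i with hT
  set D : Fin m → Submodule R A := fun i => ⨅ j ∈ Finset.univ.erase i, K j with hD
  have hDle : ∀ i j, j ≠ i → D i ≤ K j := fun i j hji =>
    iInf₂_le j (Finset.mem_erase.mpr ⟨hji, Finset.mem_univ j⟩)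
  have hTD : ∀ i, T ≤ D i := fun i => le_iInf₂ fun j _ => iInf_le K j
  have hTK : ∀ i, T ≤ K i := fun i => iInf_le K i
  have hsup : ∀ i, K i ⊔ D i = ⊤ := fun i =>
    hK.2 i (Finset.univ.erase i) (Finset.notMem_erase i _)
  have hDK : ∀ i, D i ⊓ K i = T := by
    intro i
    refine le_antisymm (le_iInf fun j => ?_) (le_inf (hTD i) (hTK i))
    rcases eq_or_ne j i with rfl | hj
    · exact inf_le_right
    · exact inf_le_left.trans (hDle i j hj)
  refine ⟨fun i => (D i).map T.mkQ, fun i h => ?_, fun i => ?_⟩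
  · rw [← LinearMap.le_ker_iff_map, Submodule.ker_mkQ] at h
    have : D i ≤ K i := h.trans (hTK i)
    have : K i = ⊤ := by rw [← hsup i, sup_eq_left.mpr this]
    exact hK.1 i this
  · have h1 : (⨆ (j) (_ : j ≠ i), (D j).map T.mkQ) ≤ (K i).map T.mkQ := by
      refine iSup₂_le fun j hj => Submodule.map_mono (hDle j i (Ne.symm hj))
    refine Disjoint.mono_right h1 (disjoint_iff.mpr ?_)
    have hmc : ∀ p : Submodule R A, T ≤ p → comap T.mkQ (map T.mkQ p) = p := by
      intro p hp
      rw [Submodule.comap_map_mkQ, sup_eq_right.mpr hp]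
    have : map T.mkQ (D i) ⊓ map T.mkQ (K i)
        = map T.mkQ (comap T.mkQ (map T.mkQ (D i) ⊓ map T.mkQ (K i))) :=
      (Submodule.map_comap_eq_of_surjective T.mkQ_surjective _).symm
    rw [this, Submodule.comap_inf, hmc _ (hTD i), hmc _ (hTK i), hDK i,
      Submodule.mkQ_map_self]

end Aux

/-- For n ≥ 2, SG.dim M = n iff the supremum of the sizes of coindependent families of
proper submodules of submodules of quotients of M equals n. -/
theorem sgoldieDim_eq_iff_coindependent_sup {R M : Type*} [Ring R] [AddCommGroup M]
    [Module R M] (n : ℕ) (hn : 2 ≤ n) :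
    sgoldieDim R M = n ↔
      (⨆ (Q : Submodule R M) (N : Submodule R (M ⧸ Q)) (m : ℕ)
        (_ : ∃ K : Fin m → Submodule R ↥N, Coindependent K), (m : ℕ∞)) = n := by
  have key : sgoldieDim R M
      = ⨆ (Q : Submodule R M) (N : Submodule R (M ⧸ Q)) (m : ℕ)
        (_ : ∃ K : Fin m → Submodule R ↥N, Coindependent K), (m : ℕ∞) := by
    apply le_antisymm
    · -- LHS ≤ RHS : from an independent family build a coindependent one
      unfold sgoldieDim goldieDim
      refine iSup_le fun Q => iSup₂_le fun m hm => ?_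
      obtain ⟨f, hf0, hfi⟩ := hm
      set N : Submodule R (M ⧸ Q) := ⨆ i, f i with hN
      have hfN : ∀ i, f i ≤ N := fun i => le_iSup f i
      set f' : Fin m → Submodule R ↥N := fun i => Submodule.comap N.subtype (f i) with hf'
      have hinj : Function.Injective N.subtype := Subtype.val_injective
      have hmap : ∀ i, Submodule.map N.subtype (f' i) = f i := by
        intro i
        rw [hf', Submodule.map_comap_subtype, inf_eq_right.mpr (hfN i)]
      have htop : (⨆ i, f' i) = ⊤ := by
        apply Submodule.map_injective_of_injective hinj
        rw [Submodule.map_iSup]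
        simp only [hmap]
        rw [Submodule.map_top, Submodule.range_subtype, hN]
      set Kc : Fin m → Submodule R ↥N :=
        fun i => ⨆ (j) (_ : j ≠ i), f' j with hKc
      have hf'le : ∀ i j, j ≠ i → f' j ≤ Kc i := fun i j hj =>
        le_iSup_of_le j (le_iSup_of_le hj le_rfl)
      have hKtop : ∀ i, Kc i ⊔ f' i = ⊤ := by
        intro i
        rw [← htop]
        refine le_antisymm (sup_le (iSup₂_le fun j _ => le_iSup f' j) (le_iSup f' i))
          (iSup_le fun j => ?_)
        rcases eq_or_ne j i with rfl | hj
        · exact le_sup_right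
        · exact (hf'le i j hj).trans le_sup_left
      have hdisj : ∀ i, f' i ⊓ Kc i = ⊥ := by
        intro i
        apply Submodule.map_injective_of_injective hinj
        rw [Submodule.map_inf _ hinj, Submodule.map_bot, hKc]
        have : Submodule.map N.subtype (⨆ (j) (_ : j ≠ i), f' j)
            = ⨆ (j) (_ : j ≠ i), f j := by
          simp only [Submodule.map_iSup, hmap]
        rw [this, hmap i, disjoint_iff.mp (hfi i)]
      refine le_iSup_of_le Q (le_iSup_of_le N (le_iSup₂_of_le m ⟨Kc, ?_, ?_⟩ le_rfl))
      · intro i hKi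
        have h1 : f' i = ⊥ := by
          rw [← hdisj i, hKi, inf_top_eq]
        have : f i = ⊥ := by rw [← hmap i, h1, Submodule.map_bot]
        exact hf0 i this
      · intro i s his
        have h1 : f' i ≤ ⨅ j ∈ s, Kc j :=
          le_iInf₂ fun j hj => hf'le j i (fun h => his (h ▸ hj))
        rw [← top_le_iff, ← hKtop i]
        exact sup_le le_sup_left (h1.trans le_sup_right)
    · -- RHS ≤ LHS : from a coindependent family build an independent one
      refine iSup_le fun Q => iSup_le fun N => iSup₂_le fun m hm => ?_
      obtain ⟨K, hK⟩ := hm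
      set T : Submodule R ↥N := ⨅ i, K i with hT
      obtain ⟨g, hg0, hgi⟩ := exists_indep_of_coindependent K hK
      set T' : Submodule R (M ⧸ Q) := Submodule.map N.subtype T with hT'
      set K' : Submodule R M := Submodule.comap Q.mkQ T' with hK'
      have hQK' : Q ≤ K' := Submodule.le_comap_mkQ Q T'
      have hmapK' : Submodule.map Q.mkQ K' = T' :=
        Submodule.map_comap_eq_of_surjective Q.mkQ_surjective T'
      let e2 : ((M ⧸ Q) ⧸ Submodule.map Q.mkQ K') ≃ₗ[R] M ⧸ K' :=
        Submodule.quotientQuotientEquivQuotient Q K' hQK'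
      let e3 : ((M ⧸ Q) ⧸ T') ≃ₗ[R] M ⧸ K' :=
        (Submodule.quotEquivOfEq T' (Submodule.map Q.mkQ K') hmapK'.symm).trans e2
      let ψ : ↥N →ₗ[R] (M ⧸ Q) ⧸ T' := T'.mkQ ∘ₗ N.subtype
      have hkerψ : LinearMap.ker ψ = T := by
        rw [LinearMap.ker_comp, Submodule.ker_mkQ, hT', Submodule.comap_map_eq,
          Submodule.ker_subtype, sup_bot_eq]
      let e1 : (↥N ⧸ T) →ₗ[R] (M ⧸ Q) ⧸ T' := T.liftQ ψ hkerψ.ge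
      have he1 : Function.Injective e1 :=
        LinearMap.ker_eq_bot.mp (Submodule.ker_liftQ_eq_bot T ψ hkerψ.ge hkerψ.le)
      have hinj : Function.Injective (e3.toLinearMap ∘ₗ e1) :=
        e3.injective.comp he1
      calc (m : ℕ∞) ≤ goldieDim R (↥N ⧸ T) := by
            unfold goldieDim
            exact le_iSup₂_of_le m ⟨g, hg0, hgi⟩ le_rfl
        _ ≤ goldieDim R (M ⧸ K') := goldieDim_le_of_injective _ hinj
        _ ≤ sgoldieDim R M := le_iSup (fun K => goldieDim R (M ⧸ K)) K'
  rw [key]
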